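/- Two first-class constraint sets C₁ and C₂ in a unital C*-algebra F select the same Dirac states if and only if C₁ - C₂ ⊆ D₁ ∩ D₂, where D_i = [F C_i] ∩ [C_i F]. In particular C₁ ∼ C₂ implies D₁ = D₂. -/

import Mathlib

set_option maxHeartbeats 1000000

open scoped ComplexConjugate

/-- A state on a unital C*-algebra: a normalized positive linear functional. -/
def IsState {F : Type*} [NormedRing F] [StarRing F] [NormedAlgebra ℂ F]
    (ω : F →ₗ[ℂ] ℂ) : Prop :=
  ω 1 = 1 ∧ ∀ a : F, ∃ r : ℝ, 0 ≤ r ∧ ω (star a * a) = (r : ℂ)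

namespace Stmt10

section basic
variable {F : Type*} [NormedRing F] [StarRing F] [NormedAlgebra ℂ F] [StarModule ℂ F]

omit [StarModule ℂ F] in
lemma diag_im {ω : F →ₗ[ℂ] ℂ} (hω : IsState ω) (z : F) : (ω (star z * z)).im = 0 := by
  obtain ⟨r, -, hr⟩ := hω.2 z; simp [hr]

omit [StarModule ℂ F] in
lemma diag_re {ω : F →ₗ[ℂ] ℂ} (hω : IsState ω) (z : F) : 0 ≤ (ω (star z * z)).re := by
  obtain ⟨r, hr0, hr⟩ := hω.2 z; simp [hr, hr0]

lemma expand_sq (l : ℂ) (x y : F) : star (x + l • y) * (x + l • y)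
    = star x * x + l • (star x * y) + star l • (star y * x) + (l * star l) • (star y * y) := by
  rw [star_add, star_smul]
  simp only [add_mul, mul_add, smul_add, smul_mul_assoc, mul_smul_comm, smul_smul]
  abel

/-- hermitian symmetry of the GNS form -/
lemma herm {ω : F →ₗ[ℂ] ℂ} (hω : IsState ω) (x y : F) :
    ω (star y * x) = conj (ω (star x * y)) := by
  have h1 : (ω (star x * y) + ω (star y * x)).im = 0 := by
    have h := diag_im hω (x + (1 : ℂ) • y)
    rw [expand_sq] at h
    simp only [map_add, map_smul, star_one, one_smul, smul_eq_mul, one_mul] at h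
    simp only [Complex.add_im, diag_im hω x, diag_im hω y] at h
    simpa using h
  have h2 : (ω (star x * y) - ω (star y * x)).re = 0 := by
    have h := diag_im hω (x + Complex.I • y)
    rw [expand_sq] at h
    simp only [map_add, map_smul, Complex.star_def, Complex.conj_I, smul_eq_mul, mul_neg,
      neg_mul, Complex.I_mul_I, neg_neg, one_mul] at h
    simp only [Complex.add_im, Complex.neg_im, Complex.mul_im, Complex.I_re, Complex.I_im,
      diag_im hω x, diag_im hω y] at h
    ring_nf at h
    simp only [Complex.sub_re]
    linarith
  set p := ω (star x * y); set q := ω (star y * x)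
  simp only [Complex.add_im] at h1
  simp only [Complex.sub_re] at h2
  apply Complex.ext
  · simp only [Complex.conj_re]; linarith
  · simp only [Complex.conj_im]; linarith

/-- degenerate Cauchy–Schwarz -/
lemma cs_zero {ω : F →ₗ[ℂ] ℂ} (hω : IsState ω) {c : F} (hc : ω (star c * c) = 0) (b : F) :
    ω (b * c) = 0 := by
  have key : ∀ x : F, ω (star x * c) = 0 := by
    intro x
    set z := ω (star x * c) with hz
    by_contra hzne
    set t : ℝ := ((ω (star x * x)).re / Complex.normSq z + 1) with ht
    set l : ℂ := (-t : ℝ) * conj z with hl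
    have h0 := diag_re hω (x + l • c)
    rw [expand_sq] at h0
    rw [map_add, map_add, map_add, map_smul, map_smul, map_smul, hc,
      herm hω x c, ← hz] at h0
    simp only [smul_eq_mul, mul_zero, add_zero, Complex.star_def] at h0
    have hsum : l * z + conj l * conj z = ((-2 * t * Complex.normSq z : ℝ) : ℂ) := by
      rw [hl, map_mul, Complex.conj_conj, Complex.conj_ofReal]
      have e : ((-t : ℝ) : ℂ) * conj z * z + ((-t : ℝ) : ℂ) * z * conj z
          = ((-t : ℝ) : ℂ) * (z * conj z) * 2 := by ring
      rw [e, Complex.mul_conj]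
      push_cast; ring
    rw [add_assoc, hsum] at h0
    simp only [Complex.add_re, Complex.ofReal_re] at h0
    have hnsq : 0 < Complex.normSq z := Complex.normSq_pos.mpr hzne
    have hre : 0 ≤ (ω (star x * x)).re := diag_re hω x
    rw [ht] at h0
    have e2 : (-2 * ((ω (star x * x)).re / Complex.normSq z + 1)) * Complex.normSq z
        = -2 * (ω (star x * x)).re - 2 * Complex.normSq z := by
      field_simp; ring
    rw [e2] at h0
    linarith
  have := key (star b)
  rwa [star_star] at this


end basic

section cstar
variable {F : Type*} [CStarAlgebra F]
lemma algebraMap_real_eq (r : ℝ) : algebraMap ℝ F r = (r : ℂ) • (1 : F) := by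
  rw [Algebra.algebraMap_eq_smul_one]
  exact (algebraMap_smul ℂ r (1 : F)).symm

lemma state_sa_real {ω : F →ₗ[ℂ] ℂ} (hω : IsState ω) {x : F} (hx : IsSelfAdjoint x) :
    (ω x).im = 0 := by
  have h := herm hω x 1
  rw [star_one, one_mul, mul_one, hx.star_eq] at h
  have := congrArg Complex.im h
  simp only [Complex.conj_im] at this
  linarith

lemma state_algebraMap {ω : F →ₗ[ℂ] ℂ} (hω : IsState ω) (r : ℝ) :
    ω (algebraMap ℝ F r) = (r : ℂ) := by
  rw [algebraMap_real_eq, map_smul, hω.1, smul_eq_mul, mul_one]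


section Order
variable [PartialOrder F] [StarOrderedRing F]
lemma exists_star_mul_self {z : F} (hz : 0 ≤ z) : ∃ y : F, z = star y * y := by
  refine ⟨CFC.sqrt z, ?_⟩
  have h1 : IsSelfAdjoint (CFC.sqrt z) := IsSelfAdjoint.of_nonneg (CFC.sqrt_nonneg z)
  rw [h1.star_eq, CFC.sqrt_mul_sqrt_self z hz]

lemma norm_sub_norm_smul_one_le [Nontrivial F] {z : F} (hz : 0 ≤ z) :
    ‖z - (‖z‖ : ℂ) • (1 : F)‖ ≤ ‖z‖ := by
  have h1 : z ≤ algebraMap ℝ F ‖z‖ :=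
    IsSelfAdjoint.le_algebraMap_norm_self (IsSelfAdjoint.of_nonneg hz)
  have h2 : 0 ≤ algebraMap ℝ F ‖z‖ - z := sub_nonneg.mpr h1
  have h3 : algebraMap ℝ F ‖z‖ - z ≤ algebraMap ℝ F ‖z‖ := by
    simpa using sub_le_self (algebraMap ℝ F ‖z‖) hz
  have h4 := CStarAlgebra.norm_le_norm_of_nonneg_of_le h2 h3
  have h5 : ‖algebraMap ℝ F ‖z‖‖ = ‖z‖ := by
    rw [algebraMap_real_eq, norm_smul]
    simp [norm_nonneg]
  rw [h5, algebraMap_real_eq] at h4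
  rw [← norm_neg, neg_sub]
  exact h4

/-- Positivity of a contractive unital functional. -/
lemma clm_isState [Nontrivial F] (f : F →L[ℂ] ℂ) (h1 : ‖f‖ ≤ 1) (h2 : f 1 = 1) :
    ∀ z : F, 0 ≤ z → (f z).im = 0 ∧ 0 ≤ (f z).re ∧ f z = (((f z).re : ℝ) : ℂ) := by
  intro z hz
  have hzsa : IsSelfAdjoint z := IsSelfAdjoint.of_nonneg hz
  have hbound : ∀ w : F, ‖f w‖ ≤ ‖w‖ := fun w => by
    calc ‖f w‖ ≤ ‖f‖ * ‖w‖ := f.le_opNorm w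
      _ ≤ 1 * ‖w‖ := by gcongr
      _ = ‖w‖ := one_mul _
  have him : (f z).im = 0 := by
    have key : ∀ s : ℝ, Complex.normSq (f z - (s : ℂ) * Complex.I) ≤ ‖z‖ ^ 2 + s ^ 2 := by
      intro s
      set l : ℂ := -((s : ℂ) * Complex.I) with hldef
      have e1 : f z - (s : ℂ) * Complex.I = f (z + l • 1) := by
        rw [map_add, map_smul]
        simp only [h2, smul_eq_mul, mul_one, hldef]
        ring
      have e2 : star (z + l • 1) * (z + l • 1) = z * z + ((s : ℂ) ^ 2) • 1 := by
        rw [expand_sq]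
        have hsl : star l = (s : ℂ) * Complex.I := by
          simp [hldef, Complex.star_def]
        rw [hsl, hzsa.star_eq, star_one, mul_one, one_mul]
        have hc : l + (s : ℂ) * Complex.I = 0 := by rw [hldef]; ring
        have hll : l * ((s : ℂ) * Complex.I) = (s : ℂ) ^ 2 := by
          rw [hldef]
          have := Complex.I_mul_I
          ring_nf
          rw [Complex.I_sq]
          ring
        rw [hll]
        rw [mul_one, show z * z + l • z + ((s : ℂ) * Complex.I) • z + ((s:ℂ)^2) • ((1:F))
            = z * z + (l + (s : ℂ) * Complex.I) • z + ((s:ℂ)^2) • (1:F) by rw [add_smul]; abel]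
        rw [hc, zero_smul, add_zero]
      have e3 : ‖z + l • 1‖ ^ 2 ≤ ‖z‖ ^ 2 + s ^ 2 := by
        have h6 : ‖z + l • 1‖ ^ 2 = ‖star (z + l • 1) * (z + l • 1)‖ := by
          rw [CStarRing.norm_star_mul_self]; ring
        rw [h6, e2]
        calc ‖z * z + ((s : ℂ) ^ 2) • (1 : F)‖ ≤ ‖z * z‖ + ‖((s : ℂ) ^ 2) • (1 : F)‖ :=
              norm_add_le _ _
          _ ≤ ‖z‖ * ‖z‖ + ‖((s : ℂ) ^ 2)‖ * ‖(1 : F)‖ := by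
              gcongr
              · exact norm_mul_le _ _
              · exact (norm_smul _ _).le
          _ = ‖z‖ ^ 2 + s ^ 2 := by
              rw [norm_one, mul_one]
              rw [show ((s:ℂ)^2) = ((s^2 : ℝ) : ℂ) by push_cast; ring]
              rw [Complex.norm_real, Real.norm_eq_abs, abs_of_nonneg (sq_nonneg s)]
              ring
      calc Complex.normSq (f z - (s : ℂ) * Complex.I)
            = ‖f z - (s : ℂ) * Complex.I‖ ^ 2 := by
              rw [← Complex.sq_norm]
        _ = ‖f (z + l • 1)‖ ^ 2 := by rw [e1]
        _ ≤ ‖z + l • 1‖ ^ 2 := by gcongr; exact hbound _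
        _ ≤ ‖z‖ ^ 2 + s ^ 2 := e3
    by_contra him
    have key2 : ∀ s : ℝ, Complex.normSq (f z) - 2 * s * (f z).im ≤ ‖z‖ ^ 2 := by
      intro s
      have hks := key s
      rw [Complex.normSq_apply] at hks ⊢
      simp only [Complex.sub_re, Complex.sub_im, Complex.mul_re, Complex.mul_im,
        Complex.ofReal_re, Complex.ofReal_im, Complex.I_re, Complex.I_im] at hks
      nlinarith [hks]
    have hk3 := key2 ((Complex.normSq (f z) - ‖z‖ ^ 2 - 1) / (2 * (f z).im))
    have e4 : 2 * ((Complex.normSq (f z) - ‖z‖ ^ 2 - 1) / (2 * (f z).im)) * (f z).im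
        = Complex.normSq (f z) - ‖z‖ ^ 2 - 1 := by
      field_simp
    rw [e4] at hk3
    linarith
  have hre : 0 ≤ (f z).re := by
    have e1 : f z - (‖z‖ : ℂ) = f (z - (‖z‖ : ℂ) • 1) := by
      rw [map_sub, map_smul]
      simp [h2]
    have e2 : ‖f z - (‖z‖ : ℂ)‖ ≤ ‖z‖ := by
      rw [e1]
      exact (hbound _).trans (norm_sub_norm_smul_one_le hz)
    have e3 : |(f z).re - ‖z‖| ≤ ‖z‖ := by
      have := Complex.abs_re_le_norm (f z - (‖z‖ : ℂ))
      simpa using this.trans e2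
    linarith [(abs_le.mp e3).1]
  exact ⟨him, hre, by apply Complex.ext <;> simp [him]⟩
lemma state_nonneg {ω : F →ₗ[ℂ] ℂ} (hω : IsState ω) {z : F} (hz : 0 ≤ z) :
    (ω z).im = 0 ∧ 0 ≤ (ω z).re := by
  obtain ⟨y, rfl⟩ := exists_star_mul_self hz
  obtain ⟨r, hr0, hr⟩ := hω.2 y
  simp [hr, hr0]

lemma state_sa_bound [Nontrivial F] {ω : F →ₗ[ℂ] ℂ} (hω : IsState ω) {x : F}
    (hx : IsSelfAdjoint x) : |(ω x).re| ≤ ‖x‖ := by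
  have h1 := state_nonneg hω (sub_nonneg.mpr hx.le_algebraMap_norm_self)
  have h2 := state_nonneg hω (sub_nonneg.mpr hx.neg_algebraMap_norm_le_self)
  rw [map_sub, state_algebraMap hω] at h1
  rw [map_sub, map_neg, state_algebraMap hω] at h2
  simp only [Complex.sub_re, Complex.ofReal_re, Complex.neg_re] at h1 h2
  rw [abs_le]
  constructor
  · linarith [h2.2]
  · linarith [h1.2]

lemma state_bound [Nontrivial F] {ω : F →ₗ[ℂ] ℂ} (hω : IsState ω) (x : F) :
    ‖ω x‖ ≤ 2 * ‖x‖ := by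
  set h : F := ((1 : ℂ)/2) • (x + star x) with hh
  set k : F := (-(Complex.I)/2) • (x - star x) with hk
  have hhsa : IsSelfAdjoint h := by
    rw [IsSelfAdjoint, hh, star_smul, star_add, star_star]
    rw [show star ((1:ℂ)/2) = (1:ℂ)/2 by simp [Complex.star_def], add_comm]
  have hksa : IsSelfAdjoint k := by
    rw [IsSelfAdjoint, hk, star_smul, star_sub, star_star]
    rw [show star (-(Complex.I)/2 : ℂ) = Complex.I/2 by
      simp [Complex.star_def, map_div₀, Complex.conj_I]]
    rw [show (-(Complex.I)/2 : ℂ) = -(Complex.I/2) by ring, neg_smul, ← smul_neg, neg_sub]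
  have hx2 : h + Complex.I • k = x := by
    rw [hh, hk, smul_smul]
    rw [show Complex.I * (-(Complex.I)/2) = (1/2 : ℂ) by
      field_simp; simp [Complex.I_sq]]
    rw [← smul_add, show x + star x + (x - star x) = x + x by abel, ← two_smul ℂ x,
      smul_smul]
    norm_num
  have hωx : ω x = ω h + Complex.I * ω k := by
    rw [← hx2]
    simp only [map_add, map_smul, smul_eq_mul]

  have habs : ∀ y : F, IsSelfAdjoint y → ‖ω y‖ ≤ ‖y‖ := by
    intro y hy
    have hyeq : ω y = (((ω y).re : ℝ) : ℂ) := Complex.ext rfl (state_sa_real hω hy)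
    rw [hyeq, Complex.norm_real, Real.norm_eq_abs]
    exact state_sa_bound hω hy
  have hnh : ‖h‖ ≤ ‖x‖ := by
    rw [hh, norm_smul]
    calc ‖(1:ℂ)/2‖ * ‖x + star x‖ ≤ ‖(1:ℂ)/2‖ * (‖x‖ + ‖star x‖) := by
          gcongr; exact norm_add_le _ _
      _ = ‖x‖ := by rw [norm_star]; simp; ring
  have hnk : ‖k‖ ≤ ‖x‖ := by
    rw [hk, norm_smul]
    calc ‖-(Complex.I)/2‖ * ‖x - star x‖ ≤ ‖-(Complex.I)/2‖ * (‖x‖ + ‖star x‖) := by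
          gcongr; exact norm_sub_le _ _
      _ = ‖x‖ := by rw [norm_star]; simp; ring
  calc ‖ω x‖ = ‖ω h + Complex.I * ω k‖ := by rw [hωx]
    _ ≤ ‖ω h‖ + ‖Complex.I * ω k‖ := norm_add_le _ _
    _ = ‖ω h‖ + ‖ω k‖ := by rw [norm_mul, Complex.norm_I, one_mul]
    _ ≤ ‖x‖ + ‖x‖ := add_le_add ((habs h hhsa).trans hnh) ((habs k hksa).trans hnk)
    _ = 2 * ‖x‖ := by ring

/-- Bundle a state as a continuous linear map. -/
noncomputable def stateCLM [Nontrivial F] {ω : F →ₗ[ℂ] ℂ} (hω : IsState ω) : F →L[ℂ] ℂ :=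
  LinearMap.mkContinuous ω 2 (state_bound hω)

lemma stateCLM_apply [Nontrivial F] {ω : F →ₗ[ℂ] ℂ} (hω : IsState ω) (x : F) :
    stateCLM hω x = ω x := rfl

/-- Existence of a norm-one unital functional attaining the norm at a nonneg element. -/
lemma exists_attaining [Nontrivial F] {q : F} (hq : 0 ≤ q) :
    ∃ f : F →L[ℂ] ℂ, ‖f‖ ≤ 1 ∧ f 1 = 1 ∧ f q = (‖q‖ : ℂ) := by
  have hqsa : IsSelfAdjoint q := IsSelfAdjoint.of_nonneg hq
  haveI : IsStarNormal q := hqsa.isStarNormal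
  set A := StarAlgebra.elemental ℂ q with hA
  haveI : IsClosed (A : Set F) := StarAlgebra.elemental.isClosed ℂ q
  -- the norm is in the ℂ-spectrum
  have h1 : (‖q‖ : ℂ) ∈ spectrum ℂ q := by
    have h0 : ‖q‖ ∈ spectrum ℝ q := CStarAlgebra.norm_mem_spectrum_of_nonneg hq
    simpa using spectrum.algebraMap_mem ℂ h0
  -- spectral permanence
  have h2 : (‖q‖ : ℂ) ∈ spectrum ℂ (⟨q, StarAlgebra.elemental.self_mem ℂ q⟩ : A) := by
    rw [StarSubalgebra.spectrum_eq]
    exact h1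
  obtain ⟨φ, hφ⟩ := WeakDual.CharacterSpace.mem_spectrum_iff_exists.mp h2
  -- bound for the character
  have hφb : ∀ x : A, ‖φ x‖ ≤ ‖x‖ := by
    intro x
    have := AlgHom.apply_mem_spectrum (WeakDual.CharacterSpace.toAlgHom φ) x
    have h3 : φ x ∈ spectrum ℂ x := this
    exact spectrum.norm_le_norm_of_mem h3
  -- restrict to the submodule and extend by Hahn-Banach
  set p : Submodule ℂ F := Subalgebra.toSubmodule A.toSubalgebra with hp
  have hmem : ∀ x : F, x ∈ p ↔ x ∈ A := fun x => Iff.rfl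
  let l₀ : p →ₗ[ℂ] ℂ :=
    { toFun := fun x => φ ⟨x.1, x.2⟩
      map_add' := by intros; rw [← map_add]; rfl
      map_smul' := by intros; rw [← map_smul]; rfl }
  have hl₀ : ∀ x : p, ‖l₀ x‖ ≤ 1 * ‖x‖ := by
    intro x
    rw [one_mul]
    exact hφb ⟨x.1, x.2⟩
  let g : p →L[ℂ] ℂ := LinearMap.mkContinuous l₀ 1 hl₀
  obtain ⟨f, hf, hfn⟩ := exists_extension_norm_eq p g
  refine ⟨f, ?_, ?_, ?_⟩
  · rw [hfn]
    exact LinearMap.mkContinuous_norm_le l₀ zero_le_one hl₀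
  · have h4 := hf ⟨1, one_mem A⟩
    have h5 : g ⟨1, one_mem A⟩ = 1 := by
      show φ ⟨1, one_mem A⟩ = 1
      exact map_one φ
    exact h4.trans h5
  · have h4 := hf ⟨q, StarAlgebra.elemental.self_mem ℂ q⟩
    have h5 : g ⟨q, StarAlgebra.elemental.self_mem ℂ q⟩ = (‖q‖ : ℂ) := hφ
    exact h4.trans h5
/-- The per-index approximate Dirac functional. -/
lemma exists_psi [Nontrivial F] (C : Set F) (a : F) {d : ℝ} (hd : 0 < d)
    (hdK : ∀ x ∈ Submodule.span ℂ {x : F | ∃ b : F, ∃ c ∈ C, x = b * c}, d ≤ ‖a - x‖)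
    (S : Finset {x : F // x ∈ C}) (n : ℕ) :
    ∃ ψ : F →L[ℂ] ℂ,
      ψ 1 = 1 ∧
      (∀ y : F, (ψ (star y * y)).im = 0 ∧ 0 ≤ (ψ (star y * y)).re) ∧
      (∀ x : F, ‖ψ x‖ ≤ (‖a‖ ^ 2 / d ^ 2) * ‖x‖) ∧
      ((ψ (star a * a)).im = 0 ∧ d ^ 2 ≤ (ψ (star a * a)).re) ∧
      (∀ c : {x : F // x ∈ C}, c ∈ S →
        ‖ψ (star c.1 * c.1)‖ ≤ (‖a‖ ^ 2 / d ^ 2) * ((n : ℝ) + 1)⁻¹) := by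
  classical
  have ha0 : a ≠ 0 := by
    intro h0
    have := hdK 0 (Submodule.zero_mem _)
    rw [h0] at this; simp at this; linarith
  have hna : 0 < ‖a‖ := norm_pos_iff.mpr ha0
  set M : ℝ := ‖a‖ ^ 2 with hM
  have hMpos : 0 < M := by positivity
  set ε : ℝ := ((n : ℝ) + 1)⁻¹ with hε
  have hεpos : 0 < ε := by positivity
  set b : F := ∑ c ∈ S, star c.1 * c.1 with hb
  have hb0 : 0 ≤ b := Finset.sum_nonneg fun c _ => star_mul_self_nonneg c.1
  have hspec : ∀ t ∈ spectrum ℝ b, 0 ≤ t := fun t ht => spectrum_nonneg_of_nonneg hb0 ht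
  have hbsa : IsSelfAdjoint b := IsSelfAdjoint.of_nonneg hb0
  have hcont_inv : ContinuousOn (fun t : ℝ => (t + ε)⁻¹) (spectrum ℝ b) := by
    apply ContinuousOn.inv₀ (by fun_prop)
    intro t ht
    have := hspec t ht
    positivity
  set w : F := cfc (fun t : ℝ => (t + ε)⁻¹) b with hw
  set u : F := b * w with hu
  set v : F := cfc (fun t : ℝ => ε * (t + ε)⁻¹) b with hv
  have hucfc : u = cfc (fun t : ℝ => t * (t + ε)⁻¹) b := by
    rw [hu, hw]
    nth_rewrite 1 [← cfc_id' ℝ b]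
    rw [← cfc_mul _ _ b (by fun_prop) hcont_inv]
  have hwb : w * b = u := by
    rw [hucfc, hw]
    nth_rewrite 2 [← cfc_id' ℝ b]
    rw [← cfc_mul _ _ b hcont_inv (by fun_prop)]
    exact cfc_congr fun t _ => mul_comm _ _
  have huv : u + v = 1 := by
    rw [hucfc, hv, ← cfc_add b (fun t : ℝ => t * (t + ε)⁻¹) (fun t : ℝ => ε * (t + ε)⁻¹) (ContinuousOn.fun_mul (by fun_prop) hcont_inv)
      (ContinuousOn.fun_mul (by fun_prop) hcont_inv)]
    rw [cfc_congr (g := fun _ : ℝ => (1 : ℝ)) (fun t ht => by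
      have h1 := hspec t ht
      field_simp)]
    exact cfc_const_one ℝ b
  have hv0 : 0 ≤ v := by
    rw [hv]
    apply cfc_nonneg
    intro t ht
    have := hspec t ht
    positivity
  have hvsa : IsSelfAdjoint v := IsSelfAdjoint.of_nonneg hv0
  have hvnorm : ‖v‖ ≤ 1 := by
    rw [hv]
    apply norm_cfc_le zero_le_one
    intro t ht
    have h1 := hspec t ht
    rw [Real.norm_eq_abs, abs_of_nonneg (by positivity)]
    have h2 : ε ≤ t + ε := by linarith
    have := (div_le_one (by positivity : (0:ℝ) < t + ε)).mpr h2
    rwa [div_eq_mul_inv] at this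
  have hvbv : ‖v * b * v‖ ≤ ε := by
    have e1 : v * b = cfc (fun t : ℝ => ε * (t + ε)⁻¹ * t) b := by
      rw [hv]
      nth_rewrite 2 [← cfc_id' ℝ b]
      rw [← cfc_mul (fun t : ℝ => ε * (t + ε)⁻¹) (fun t : ℝ => t) b (ContinuousOn.fun_mul (by fun_prop) hcont_inv) (by fun_prop)]
    have e2 : v * b * v = cfc (fun t : ℝ => ε * (t + ε)⁻¹ * t * (ε * (t + ε)⁻¹)) b := by
      rw [e1, hv, ← cfc_mul (fun t : ℝ => ε * (t + ε)⁻¹ * t) (fun t : ℝ => ε * (t + ε)⁻¹) b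
        (ContinuousOn.fun_mul (ContinuousOn.fun_mul (by fun_prop) hcont_inv) (by fun_prop))
        (ContinuousOn.fun_mul (by fun_prop) hcont_inv)]
    rw [e2]
    apply norm_cfc_le hεpos.le
    intro t ht
    have h1 := hspec t ht
    have hs : (0:ℝ) < t + ε := by positivity
    rw [Real.norm_eq_abs, abs_of_nonneg (by positivity)]
    have key : ε * (t + ε)⁻¹ * t * (ε * (t + ε)⁻¹) = ε * (ε * t) / (t + ε) ^ 2 := by
      field_simp
    rw [key, div_le_iff₀ (by positivity)]
    nlinarith [mul_nonneg (mul_nonneg hεpos.le h1) h1, mul_nonneg (mul_nonneg hεpos.le h1) hεpos.le,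
      mul_nonneg (mul_nonneg hεpos.le hεpos.le) hεpos.le]
  -- span membership
  have hgb : ∀ g : F, g * b ∈ Submodule.span ℂ {x : F | ∃ bb : F, ∃ c ∈ C, x = bb * c} := by
    intro g
    rw [hb, Finset.mul_sum]
    apply Submodule.sum_mem
    intro c _
    rw [← mul_assoc]
    exact Submodule.subset_span ⟨g * star c.1, c.1, c.2, rfl⟩
  have hau_mem : a * u ∈ Submodule.span ℂ {x : F | ∃ bb : F, ∃ c ∈ C, x = bb * c} := by
    rw [← hwb, ← mul_assoc]
    exact hgb (a * w)
  have hveq : v = 1 - u := by rw [← huv]; abel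
  have hdista : d ≤ ‖a * v‖ := by
    have h1 := hdK (a * u) hau_mem
    have h2 : a - a * u = a * v := by rw [hveq, mul_sub, mul_one]
    rwa [h2] at h1
  set q : F := star (a * v) * (a * v) with hq
  have hq0 : 0 ≤ q := star_mul_self_nonneg _
  have hqe : q = v * (star a * a) * v := by
    rw [hq, star_mul, hvsa.star_eq]
    simp only [mul_assoc]
  have hqnorm : ‖q‖ = ‖a * v‖ ^ 2 := by
    rw [hq, CStarRing.norm_star_mul_self]; ring
  have hqd : d ^ 2 ≤ ‖q‖ := by
    rw [hqnorm]
    exact pow_le_pow_left₀ hd.le hdista 2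
  obtain ⟨f, hf1, hf2, hf3⟩ := exists_attaining hq0
  have pos := clm_isState f hf1 hf2
  have hfb : ∀ x : F, ‖f x‖ ≤ ‖x‖ := fun x => by
    calc ‖f x‖ ≤ ‖f‖ * ‖x‖ := f.le_opNorm x
      _ ≤ 1 * ‖x‖ := by gcongr
      _ = ‖x‖ := one_mul _
  have hvv0 : 0 ≤ v * v := by
    have := star_mul_self_nonneg v
    rwa [hvsa.star_eq] at this
  set δ : ℝ := (f (v * v)).re with hδ
  have hfvv : f (v * v) = ((δ : ℝ) : ℂ) := (pos _ hvv0).2.2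
  have hδ1 : δ ≤ 1 := by
    have h1 : ‖f (v * v)‖ ≤ ‖v * v‖ := hfb _
    have h2 : ‖v * v‖ ≤ 1 := by
      have := norm_mul_le v v
      nlinarith [norm_nonneg v]
    have h3 : |δ| ≤ 1 := by
      rw [hδ]
      refine (Complex.abs_re_le_norm _).trans ?_
      exact h1.trans h2
    linarith [abs_le.mp h3]
  have fmono : ∀ z₁ z₂ : F, z₁ ≤ z₂ → (f z₁).re ≤ (f z₂).re := by
    intro z₁ z₂ hz
    have h1 := (pos _ (sub_nonneg.mpr hz)).2.1
    rw [map_sub] at h1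
    simp only [Complex.sub_re] at h1
    linarith
  have hMub : star a * a ≤ algebraMap ℝ F M := by
    have h1 : star a * a ≤ algebraMap ℝ F ‖star a * a‖ :=
      IsSelfAdjoint.le_algebraMap_norm_self (IsSelfAdjoint.star_mul_self a)
    rwa [CStarRing.norm_star_mul_self, ← pow_two, ← hM] at h1
  have hqle : q ≤ M • (v * v) := by
    have h1 := star_left_conjugate_le_conjugate hMub v
    rw [hvsa.star_eq, ← hqe] at h1
    have e1 : v * algebraMap ℝ F M * v = M • (v * v) := by
      rw [← Algebra.commutes M v, ← Algebra.smul_def, smul_mul_assoc]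
    rwa [e1] at h1
  have hδlb : d ^ 2 / M ≤ δ := by
    have h1 : (f q).re = ‖q‖ := by rw [hf3]; simp
    have h2 := fmono _ _ hqle
    have h3 : f (M • (v * v)) = (M : ℂ) * f (v * v) := by
      rw [← algebraMap_smul ℂ M (v * v), map_smul, smul_eq_mul]
      norm_num
    rw [h3, hfvv] at h2
    have h4 : ((M : ℂ) * ((δ : ℝ) : ℂ)).re = M * δ := by
      simp [Complex.mul_re]
    rw [h1, h4] at h2
    rw [div_le_iff₀ hMpos]
    calc d ^ 2 ≤ ‖q‖ := hqd
      _ ≤ M * δ := h2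
      _ = δ * M := mul_comm _ _
  have hδpos : 0 < δ := lt_of_lt_of_le (by positivity) hδlb
  have hδinv : δ⁻¹ ≤ M / d ^ 2 := by
    have h1 : (d ^ 2 / M)⁻¹ = M / d ^ 2 := by
      rw [inv_div]
    calc δ⁻¹ ≤ (d ^ 2 / M)⁻¹ := by
          apply inv_anti₀ (by positivity) hδlb
      _ = M / d ^ 2 := h1
  have hδinv1 : (1:ℝ) ≤ δ⁻¹ := by
    have := inv_anti₀ hδpos hδ1
    rwa [inv_one] at this
  set T : F →L[ℂ] F := ContinuousLinearMap.mulLeftRight ℂ F v v with hT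
  have hTval : ∀ x : F, T x = v * x * v := fun x => rfl
  set ψ : F →L[ℂ] ℂ := (((δ⁻¹ : ℝ) : ℂ)) • (f.comp T) with hψ
  have hψval : ∀ x : F, ψ x = ((δ⁻¹ : ℝ) : ℂ) * f (v * x * v) := fun x => rfl
  have hsand : ∀ y : F, v * (star y * y) * v = star (y * v) * (y * v) := by
    intro y
    rw [star_mul, hvsa.star_eq]
    simp only [mul_assoc]
  have hnorm_coe : ‖(((δ⁻¹ : ℝ)) : ℂ)‖ = δ⁻¹ := by
    rw [Complex.norm_real, Real.norm_eq_abs, abs_of_nonneg (by positivity)]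
  refine ⟨ψ, ?_, ?_, ?_, ?_, ?_⟩
  · rw [hψval, mul_one, hfvv, ← Complex.ofReal_mul, inv_mul_cancel₀ hδpos.ne']
    norm_num
  · intro y
    rw [hψval, hsand]
    have h1 := pos _ (star_mul_self_nonneg (y * v))
    have h3 : (0:ℝ) ≤ δ⁻¹ := inv_nonneg.mpr hδpos.le
    constructor
    · rw [Complex.mul_im]
      simp only [Complex.ofReal_re, Complex.ofReal_im, h1.1]
      ring
    · rw [Complex.mul_re]
      simp only [Complex.ofReal_re, Complex.ofReal_im, h1.1]
      have h2 := h1.2.1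
      nlinarith
  · intro x
    rw [hψval, norm_mul, hnorm_coe]
    have h1 : ‖f (v * x * v)‖ ≤ ‖x‖ := by
      refine (hfb _).trans ?_
      calc ‖v * x * v‖ ≤ ‖v * x‖ * ‖v‖ := norm_mul_le _ _
        _ ≤ ‖v‖ * ‖x‖ * ‖v‖ := by gcongr; exact norm_mul_le _ _
        _ ≤ 1 * ‖x‖ * 1 := by gcongr
        _ = ‖x‖ := by ring
    calc δ⁻¹ * ‖f (v * x * v)‖ ≤ δ⁻¹ * ‖x‖ := by
          exact mul_le_mul_of_nonneg_left h1 (inv_nonneg.mpr hδpos.le)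
      _ ≤ M / d ^ 2 * ‖x‖ := mul_le_mul_of_nonneg_right hδinv (norm_nonneg x)
  · rw [hψval, ← hqe, hf3, ← Complex.ofReal_mul]
    constructor
    · simp
    · simp only [Complex.ofReal_re]
      calc d ^ 2 ≤ ‖q‖ := hqd
        _ = 1 * ‖q‖ := (one_mul _).symm
        _ ≤ δ⁻¹ * ‖q‖ := mul_le_mul_of_nonneg_right hδinv1 (norm_nonneg q)
  · intro c hc
    have hzb : star c.1 * c.1 ≤ b := by
      rw [hb]
      exact Finset.single_le_sum (fun c _ => star_mul_self_nonneg c.1) hc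
    have hle : v * (star c.1 * c.1) * v ≤ v * b * v := by
      have := star_left_conjugate_le_conjugate hzb v
      rwa [hvsa.star_eq] at this
    have h0 : 0 ≤ v * (star c.1 * c.1) * v := by
      rw [hsand]
      exact star_mul_self_nonneg _
    have h2 : ‖v * (star c.1 * c.1) * v‖ ≤ ε :=
      (CStarAlgebra.norm_le_norm_of_nonneg_of_le h0 hle).trans hvbv
    rw [hψval, norm_mul, hnorm_coe]
    calc δ⁻¹ * ‖f (v * (star c.1 * c.1) * v)‖ ≤ δ⁻¹ * ε := by
          exact mul_le_mul_of_nonneg_left ((hfb _).trans h2) (inv_nonneg.mpr hδpos.le)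
      _ ≤ M / d ^ 2 * ε := mul_le_mul_of_nonneg_right hδinv hεpos.le
/-- Key lemma: if every Dirac state of `C` kills `star a * a`, then
`a` lies in the closed left ideal generated by `C`. -/
lemma key_L [Nontrivial F] (C : Set F) (a : F)
    (h : ∀ ψ : F →ₗ[ℂ] ℂ, IsState ψ → (∀ c ∈ C, ψ (star c * c) = 0) →
      ψ (star a * a) = 0) :
    a ∈ closure ((Submodule.span ℂ {x : F | ∃ b : F, ∃ c ∈ C, x = b * c} : Submodule ℂ F) :
      Set F) := by
  classical
  by_contra ha
  set Sp : Set F :=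
    ((Submodule.span ℂ {x : F | ∃ b : F, ∃ c ∈ C, x = b * c} : Submodule ℂ F) : Set F) with hSp
  set K : Set F := closure Sp with hK
  have hKne : K.Nonempty := ⟨0, subset_closure (Submodule.zero_mem _)⟩
  have ha0 : a ≠ 0 := fun h0 => ha (h0 ▸ subset_closure (Submodule.zero_mem _))
  have hna : 0 < ‖a‖ := norm_pos_iff.mpr ha0
  have hd : 0 < Metric.infDist a K := (isClosed_closure.notMem_iff_infDist_pos hKne).mp ha
  set d : ℝ := Metric.infDist a K with hdd
  have hdK : ∀ x ∈ Submodule.span ℂ {x : F | ∃ b : F, ∃ c ∈ C, x = b * c}, d ≤ ‖a - x‖ := by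
    intro x hx
    have : x ∈ K := subset_closure hx
    calc d ≤ dist a x := Metric.infDist_le_dist_of_mem this
      _ = ‖a - x‖ := dist_eq_norm a x
  set R : ℝ := ‖a‖ ^ 2 / d ^ 2 with hR
  -- index type
  set ι := Finset {x : F // x ∈ C} × ℕ with hι
  have := fun i : ι => exists_psi C a hd hdK i.1 i.2
  choose Ψ hΨ1 hΨpos hΨb hΨa hΨc using this
  -- view as net in the weak dual
  set Φ : ι → WeakDual ℂ F := fun i => (Ψ i : F →L[ℂ] ℂ) with hΦ
  set l : Filter (WeakDual ℂ F) := Filter.map Φ Filter.atTop with hl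
  haveI : Nonempty ι := ⟨(∅, 0)⟩
  haveI : Filter.NeBot (Filter.atTop (α := ι)) := Filter.atTop_neBot
  haveI hlne : l.NeBot := Filter.map_neBot
  have hcomp : IsCompact (WeakDual.toStrongDual ⁻¹' Metric.closedBall 0 R :
      Set (WeakDual ℂ F)) := WeakDual.isCompact_closedBall 0 R
  have hle : l ≤ Filter.principal (WeakDual.toStrongDual ⁻¹' Metric.closedBall 0 R) := by
    rw [hl, Filter.le_principal_iff, Filter.mem_map]
    apply Filter.Eventually.mono (Filter.eventually_ge_atTop (⟨∅, 0⟩ : ι))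
    intro i _
    show Φ i ∈ _
    simp only [Set.mem_preimage, Metric.mem_closedBall]
    rw [dist_zero_right]
    apply ContinuousLinearMap.opNorm_le_bound _ (by positivity)
    exact hΨb i
  obtain ⟨ψ, hψmem, hψcl⟩ := hcomp.exists_clusterPt hle
  -- extraction of pointwise conditions
  have hext : ∀ (x : F) (s : Set ℂ), IsClosed s →
      (∀ᶠ i in Filter.atTop, Ψ i x ∈ s) → ψ x ∈ s := by
    intro x s hs hev
    have hcont : Continuous fun g : WeakDual ℂ F => g x := WeakDual.eval_continuous x
    have h1 : ClusterPt (ψ x) (Filter.map (fun g : WeakDual ℂ F => g x) l) :=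
      hψcl.map hcont.continuousAt Filter.tendsto_map
    have h2 : Filter.map (fun g : WeakDual ℂ F => g x) l ≤ Filter.principal s := by
      rw [hl, Filter.map_map, Filter.le_principal_iff, Filter.mem_map]
      exact hev
    have h3 : ClusterPt (ψ x) (Filter.principal s) := h1.mono h2
    exact hs.closure_subset (mem_closure_iff_clusterPt.mpr h3)
  -- ψ is a state
  have hψ1 : ψ 1 = 1 := by
    have := hext 1 {1} isClosed_singleton (Filter.Eventually.of_forall fun i => hΨ1 i)
    simpa using this
  have hψpos : ∀ y : F, (ψ (star y * y)).im = 0 ∧ 0 ≤ (ψ (star y * y)).re := by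
    intro y
    have hclosed : IsClosed {z : ℂ | z.im = 0 ∧ 0 ≤ z.re} := by
      apply IsClosed.inter
      · exact isClosed_eq Complex.continuous_im continuous_const
      · exact isClosed_le continuous_const Complex.continuous_re
    exact hext _ _ hclosed (Filter.Eventually.of_forall fun i => hΨpos i y)
  have hψa : (ψ (star a * a)).im = 0 ∧ d ^ 2 ≤ (ψ (star a * a)).re := by
    have hclosed : IsClosed {z : ℂ | z.im = 0 ∧ d ^ 2 ≤ z.re} := by
      apply IsClosed.inter
      · exact isClosed_eq Complex.continuous_im continuous_const
      · exact isClosed_le continuous_const Complex.continuous_re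
    exact hext _ _ hclosed (Filter.Eventually.of_forall fun i => hΨa i)
  have hψc : ∀ c ∈ C, ψ (star c * c) = 0 := by
    intro c hc
    have key : ∀ η : ℝ, 0 < η → ‖ψ (star c * c)‖ ≤ η := by
      intro η hη
      obtain ⟨N, hN⟩ := exists_nat_gt (R / η)
      have hev : ∀ᶠ i in Filter.atTop, Ψ i (star c * c) ∈ Metric.closedBall (0:ℂ) η := by
        apply Filter.Eventually.mono (Filter.eventually_ge_atTop (({⟨c, hc⟩}, N) : ι))
        intro i hi
        simp only [Metric.mem_closedBall, dist_zero_right]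
        have hcS : (⟨c, hc⟩ : {x : F // x ∈ C}) ∈ i.1 := by
          have := hi.1
          simp only [Finset.le_iff_subset] at this
          exact this (Finset.mem_singleton_self _)
        have hni : N ≤ i.2 := hi.2
        refine (hΨc i ⟨c, hc⟩ hcS).trans ?_
        have h1 : ((i.2 : ℝ) + 1)⁻¹ ≤ ((N : ℝ) + 1)⁻¹ := by
          apply inv_anti₀ (by positivity)
          have : (N : ℝ) ≤ (i.2 : ℝ) := Nat.cast_le.mpr hni
          linarith
        have hRpos : 0 < R := by rw [hR]; positivity
        refine (mul_le_mul_of_nonneg_left h1 hRpos.le).trans ?_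
        have hN1 : (0:ℝ) < (N : ℝ) + 1 := by positivity
        rw [mul_inv_le_iff₀ hN1]
        have hRN : R < (N : ℝ) * η := (div_lt_iff₀ hη).mp hN
        nlinarith
      have := hext _ _ Metric.isClosed_closedBall hev
      simpa [dist_zero_right] using this
    have h0 : ‖ψ (star c * c)‖ ≤ 0 := by
      by_contra hcon
      push_neg at hcon
      have := key (‖ψ (star c * c)‖ / 2) (by linarith)
      linarith
    simpa using norm_le_zero_iff.mp h0
  -- assemble the state and contradict
  have hstate : IsState (ψ : F →ₗ[ℂ] ℂ) := by
    constructor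
    · exact hψ1
    · intro y
      exact ⟨(ψ (star y * y)).re, (hψpos y).2,
        Complex.ext (by simp) (by simp [(hψpos y).1])⟩
  have := h (ψ : F →ₗ[ℂ] ℂ) hstate hψc
  have h2 : (ψ (star a * a)).re = 0 := by
    rw [show ((ψ : F →ₗ[ℂ] ℂ) (star a * a)) = ψ (star a * a) from rfl] at this
    rw [this]
    simp
  nlinarith [hψa.2, hd]

/-- left-multiplication stability of the left span -/
lemma spanL_mul (C : Set F) (g : F) {x : F}
    (hx : x ∈ Submodule.span ℂ {x : F | ∃ b : F, ∃ c ∈ C, x = b * c}) :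
    g * x ∈ Submodule.span ℂ {x : F | ∃ b : F, ∃ c ∈ C, x = b * c} := by
  induction hx using Submodule.span_induction with
  | mem y hy =>
      obtain ⟨b, c, hc, rfl⟩ := hy
      rw [← mul_assoc]
      exact Submodule.subset_span ⟨g * b, c, hc, rfl⟩
  | zero => rw [mul_zero]; exact Submodule.zero_mem _
  | add y z _ _ hy hz => rw [mul_add]; exact Submodule.add_mem _ hy hz
  | smul l y _ hy => rw [mul_smul_comm]; exact Submodule.smul_mem _ l hy

lemma closure_spanL_mul (C : Set F) (g : F) {x : F}
    (hx : x ∈ closure ((Submodule.span ℂ {x : F | ∃ b : F, ∃ c ∈ C, x = b * c} :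
      Submodule ℂ F) : Set F)) :
    g * x ∈ closure ((Submodule.span ℂ {x : F | ∃ b : F, ∃ c ∈ C, x = b * c} :
      Submodule ℂ F) : Set F) := by
  have hcont : Continuous fun z : F => g * z := continuous_const.mul continuous_id
  exact map_mem_closure hcont hx fun y hy => spanL_mul C g hy

lemma spanR_mul (C : Set F) (g : F) {x : F}
    (hx : x ∈ Submodule.span ℂ {x : F | ∃ b : F, ∃ c ∈ C, x = c * b}) :
    x * g ∈ Submodule.span ℂ {x : F | ∃ b : F, ∃ c ∈ C, x = c * b} := by
  induction hx using Submodule.span_induction with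
  | mem y hy =>
      obtain ⟨b, c, hc, rfl⟩ := hy
      rw [mul_assoc]
      exact Submodule.subset_span ⟨b * g, c, hc, rfl⟩
  | zero => rw [zero_mul]; exact Submodule.zero_mem _
  | add y z _ _ hy hz => rw [add_mul]; exact Submodule.add_mem _ hy hz
  | smul l y _ hy => rw [smul_mul_assoc]; exact Submodule.smul_mem _ l hy

lemma closure_spanR_mul (C : Set F) (g : F) {x : F}
    (hx : x ∈ closure ((Submodule.span ℂ {x : F | ∃ b : F, ∃ c ∈ C, x = c * b} :
      Submodule ℂ F) : Set F)) :
    x * g ∈ closure ((Submodule.span ℂ {x : F | ∃ b : F, ∃ c ∈ C, x = c * b} :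
      Submodule ℂ F) : Set F) := by
  have hcont : Continuous fun z : F => z * g := continuous_id.mul continuous_const
  exact map_mem_closure (f := fun z : F => z * g) hcont hx fun y hy => spanR_mul C g hy

/-- star swaps the two spans (for a selfadjoint generating set). -/
lemma star_spanL (C : Set F) (hC : ∀ c ∈ C, star c ∈ C) {x : F}
    (hx : x ∈ Submodule.span ℂ {x : F | ∃ b : F, ∃ c ∈ C, x = b * c}) :
    star x ∈ Submodule.span ℂ {x : F | ∃ b : F, ∃ c ∈ C, x = c * b} := by
  induction hx using Submodule.span_induction with
  | mem y hy =>
      obtain ⟨b, c, hc, rfl⟩ := hy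
      rw [star_mul]
      exact Submodule.subset_span ⟨star b, star c, hC c hc, rfl⟩
  | zero => rw [star_zero]; exact Submodule.zero_mem _
  | add y z _ _ hy hz => rw [star_add]; exact Submodule.add_mem _ hy hz
  | smul l y _ hy =>
      rw [star_smul]
      exact Submodule.smul_mem _ _ hy

lemma closure_star_spanL (C : Set F) (hC : ∀ c ∈ C, star c ∈ C) {x : F}
    (hx : x ∈ closure ((Submodule.span ℂ {x : F | ∃ b : F, ∃ c ∈ C, x = b * c} :
      Submodule ℂ F) : Set F)) :
    star x ∈ closure ((Submodule.span ℂ {x : F | ∃ b : F, ∃ c ∈ C, x = c * b} :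
      Submodule ℂ F) : Set F) :=
  map_mem_closure continuous_star hx fun y hy => star_spanL C hC hy

/-- a state which is Dirac on `C` kills `x * y` for `y` in the closed left ideal. -/
lemma state_kills_L [Nontrivial F] {ω : F →ₗ[ℂ] ℂ} (hω : IsState ω) {C : Set F}
    (hC : ∀ c ∈ C, ω (star c * c) = 0) (x : F) {y : F}
    (hy : y ∈ closure ((Submodule.span ℂ {x : F | ∃ b : F, ∃ c ∈ C, x = b * c} :
      Submodule ℂ F) : Set F)) :
    ω (x * y) = 0 := by
  have hωcont : Continuous ω :=
    AddMonoidHomClass.continuous_of_bound ω 2 (state_bound hω)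
  have hcont : Continuous fun z : F => ω (x * z) :=
    hωcont.comp (continuous_const.mul continuous_id)
  have hclosed : IsClosed {z : F | ω (x * z) = 0} :=
    isClosed_eq hcont continuous_const
  have hsub : ((Submodule.span ℂ {x : F | ∃ b : F, ∃ c ∈ C, x = b * c} :
      Submodule ℂ F) : Set F) ⊆ {z : F | ω (x * z) = 0} := by
    intro z hz
    induction hz using Submodule.span_induction with
    | mem y hy =>
        obtain ⟨b, c, hc, rfl⟩ := hy
        show ω (x * (b * c)) = 0
        rw [← mul_assoc]
        exact cs_zero hω (hC c hc) (x * b)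
    | zero => show ω (x * 0) = 0; rw [mul_zero, map_zero]
    | add y z _ _ hy hz =>
        show ω (x * (y + z)) = 0
        rw [mul_add, map_add, hy, hz, add_zero]
    | smul l y _ hy =>
        show ω (x * l • y) = 0
        rw [mul_smul_comm, map_smul, hy, smul_zero]
  exact closure_minimal hsub hclosed hy



end Order
end cstar
/-- closure of a span generated inside the closure of a submodule. -/
lemma closure_span_subset {F : Type*} [CStarAlgebra F] {s : Set F} {t : Submodule ℂ F}
    (h : s ⊆ closure (t : Set F)) :
    closure ((Submodule.span ℂ s : Submodule ℂ F) : Set F) ⊆ closure (t : Set F) := by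
  have h' : s ⊆ (t.topologicalClosure : Set F) := by
    rw [Submodule.topologicalClosure_coe]; exact h
  have h2 : Submodule.span ℂ s ≤ t.topologicalClosure := Submodule.span_le.mpr h'
  refine closure_minimal (fun y hy => ?_) isClosed_closure
  have := h2 hy
  rwa [← Submodule.topologicalClosure_coe]

lemma sub_mem_closure' {F : Type*} [CStarAlgebra F] {t : Submodule ℂ F} {x y : F}
    (hx : x ∈ closure (t : Set F)) (hy : y ∈ closure (t : Set F)) :
    x - y ∈ closure (t : Set F) := by
  have hx' : x ∈ t.topologicalClosure := by rwa [← Submodule.topologicalClosure_coe] at hx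
  have hy' : y ∈ t.topologicalClosure := by rwa [← Submodule.topologicalClosure_coe] at hy
  have := Submodule.sub_mem _ hx' hy'
  rwa [← Submodule.topologicalClosure_coe]

end Stmt10

open Stmt10 in
theorem stmt_10 {F : Type*} [NormedRing F] [StarRing F] [CStarRing F]
    [NormedAlgebra ℂ F] [StarModule ℂ F] [CompleteSpace F]
    (C₁ C₂ : Set F) (hC₁ : ∀ c ∈ C₁, star c ∈ C₁) (hC₂ : ∀ c ∈ C₂, star c ∈ C₂)
    (hne₁ : C₁.Nonempty) (hne₂ : C₂.Nonempty)
    (hfc₁ : ∃ ω : F →ₗ[ℂ] ℂ, IsState ω ∧ ∀ c ∈ C₁, ω (star c * c) = 0)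
    (hfc₂ : ∃ ω : F →ₗ[ℂ] ℂ, IsState ω ∧ ∀ c ∈ C₂, ω (star c * c) = 0) :
    let Nker : (F →ₗ[ℂ] ℂ) → Set F := fun ω => {a : F | ω (star a * a) = 0}
    let D₁ : Set F :=
      closure ((Submodule.span ℂ {x : F | ∃ a : F, ∃ c ∈ C₁, x = a * c} : Submodule ℂ F) : Set F) ∩
      closure ((Submodule.span ℂ {x : F | ∃ a : F, ∃ c ∈ C₁, x = c * a} : Submodule ℂ F) : Set F)
    let D₂ : Set F :=
      closure ((Submodule.span ℂ {x : F | ∃ a : F, ∃ c ∈ C₂, x = a * c} : Submodule ℂ F) : Set F) ∩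
      closure ((Submodule.span ℂ {x : F | ∃ a : F, ∃ c ∈ C₂, x = c * a} : Submodule ℂ F) : Set F)
    ((∀ ω : F →ₗ[ℂ] ℂ, IsState ω → (C₁ ⊆ Nker ω ↔ C₂ ⊆ Nker ω)) ↔
      (∀ c₁ ∈ C₁, ∀ c₂ ∈ C₂, c₁ - c₂ ∈ D₁ ∩ D₂)) ∧
    ((∀ ω : F →ₗ[ℂ] ℂ, IsState ω → (C₁ ⊆ Nker ω ↔ C₂ ⊆ Nker ω)) → D₁ = D₂) := by
  letI : CStarAlgebra F := { }
  intro Nker D₁ D₂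
  obtain ⟨ω₀, hω₀, -⟩ := hfc₁
  haveI hnt : Nontrivial F := by
    by_contra h
    rw [not_nontrivial_iff_subsingleton] at h
    have h1 : (1 : F) = 0 := Subsingleton.elim _ _
    have h2 := hω₀.1
    rw [h1, map_zero] at h2
    exact one_ne_zero h2.symm
  letI : PartialOrder F := CStarAlgebra.spectralOrder F
  letI : StarOrderedRing F := CStarAlgebra.spectralOrderedRing F
  -- notation
  set L : Set F → Set F := fun C =>
    closure ((Submodule.span ℂ {x : F | ∃ a : F, ∃ c ∈ C, x = a * c} : Submodule ℂ F) : Set F)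
    with hL
  set R : Set F → Set F := fun C =>
    closure ((Submodule.span ℂ {x : F | ∃ a : F, ∃ c ∈ C, x = c * a} : Submodule ℂ F) : Set F)
    with hR
  have memL : ∀ (C : Set F) (c : F), c ∈ C → c ∈ L C := fun C c hc =>
    subset_closure (Submodule.subset_span ⟨1, c, hc, (one_mul c).symm⟩)
  have memR : ∀ (C : Set F) (c : F), c ∈ C → c ∈ R C := fun C c hc =>
    subset_closure (Submodule.subset_span ⟨1, c, hc, (mul_one c).symm⟩)
  -- the hard direction: same Dirac states imply C₂ ⊆ D₁ and C₁ ⊆ D₂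
  have hard : (∀ ω : F →ₗ[ℂ] ℂ, IsState ω → (C₁ ⊆ Nker ω ↔ C₂ ⊆ Nker ω)) →
      (∀ c₂ ∈ C₂, c₂ ∈ L C₁ ∧ c₂ ∈ R C₁) ∧ (∀ c₁ ∈ C₁, c₁ ∈ L C₂ ∧ c₁ ∈ R C₂) := by
    intro hLHS
    constructor
    · intro c₂ hc₂
      have hdir : ∀ ψ : F →ₗ[ℂ] ℂ, IsState ψ → (∀ c ∈ C₁, ψ (star c * c) = 0) →
          C₂ ⊆ Nker ψ := by
        intro ψ hψ hd
        exact (hLHS ψ hψ).mp (fun c hc => hd c hc)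
      constructor
      · exact key_L C₁ c₂ fun ψ hψ hd => hdir ψ hψ hd hc₂
      · have h1 : star c₂ ∈ L C₁ :=
          key_L C₁ (star c₂) fun ψ hψ hd => hdir ψ hψ hd (hC₂ c₂ hc₂)
        have h2 := closure_star_spanL C₁ hC₁ h1
        rwa [star_star] at h2
    · intro c₁ hc₁
      have hdir : ∀ ψ : F →ₗ[ℂ] ℂ, IsState ψ → (∀ c ∈ C₂, ψ (star c * c) = 0) →
          C₁ ⊆ Nker ψ := by
        intro ψ hψ hd
        exact (hLHS ψ hψ).mpr (fun c hc => hd c hc)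
      constructor
      · exact key_L C₂ c₁ fun ψ hψ hd => hdir ψ hψ hd hc₁
      · have h1 : star c₁ ∈ L C₂ :=
          key_L C₂ (star c₁) fun ψ hψ hd => hdir ψ hψ hd (hC₁ c₁ hc₁)
        have h2 := closure_star_spanL C₂ hC₂ h1
        rwa [star_star] at h2
  -- the easy direction: C₂ ⊆ D₁ and C₁ ⊆ D₂ imply same Dirac states
  have easy : (∀ c₂ ∈ C₂, c₂ ∈ L C₁) → (∀ c₁ ∈ C₁, c₁ ∈ L C₂) →
      ∀ ω : F →ₗ[ℂ] ℂ, IsState ω → (C₁ ⊆ Nker ω ↔ C₂ ⊆ Nker ω) := by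
    intro h21 h12 ω hω
    constructor
    · intro hsub c₂ hc₂
      show ω (star c₂ * c₂) = 0
      exact state_kills_L hω (fun c hc => hsub hc) (star c₂) (h21 c₂ hc₂)
    · intro hsub c₁ hc₁
      show ω (star c₁ * c₁) = 0
      exact state_kills_L hω (fun c hc => hsub hc) (star c₁) (h12 c₁ hc₁)
  constructor
  · constructor
    · -- forward
      intro hLHS c₁ hc₁ c₂ hc₂
      obtain ⟨h2, h1⟩ := hard hLHS
      obtain ⟨h2L, h2R⟩ := h2 c₂ hc₂
      obtain ⟨h1L, h1R⟩ := h1 c₁ hc₁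
      exact ⟨⟨sub_mem_closure' (memL C₁ c₁ hc₁) h2L, sub_mem_closure' (memR C₁ c₁ hc₁) h2R⟩,
        ⟨sub_mem_closure' h1L (memL C₂ c₂ hc₂), sub_mem_closure' h1R (memR C₂ c₂ hc₂)⟩⟩
    · -- backward
      intro hRHS
      obtain ⟨c₁, hc₁⟩ := hne₁
      obtain ⟨c₂, hc₂⟩ := hne₂
      have h21 : ∀ c ∈ C₂, c ∈ L C₁ := by
        intro c hc
        have hd := (hRHS c₁ hc₁ c hc).1.1
        have := sub_mem_closure' (memL C₁ c₁ hc₁) hd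
        rwa [sub_sub_cancel] at this
      have h12 : ∀ c ∈ C₁, c ∈ L C₂ := by
        intro c hc
        have hd := (hRHS c hc c₂ hc₂).2.1
        have h0 : (0:F) - c₂ ∈ L C₂ :=
          sub_mem_closure' (subset_closure (Submodule.zero_mem _)) (memL C₂ c₂ hc₂)
        have hfin := sub_mem_closure' hd h0
        have e : (c - c₂) - ((0:F) - c₂) = c := by abel
        rwa [e] at hfin
      exact easy h21 h12
  · -- D₁ = D₂
    intro hLHS
    obtain ⟨h2, h1⟩ := hard hLHS
    have hD21 : D₂ ⊆ D₁ := by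
      intro x hx
      refine ⟨?_, ?_⟩
      · refine closure_span_subset ?_ hx.1
        rintro y ⟨a, c, hc, rfl⟩
        exact closure_spanL_mul C₁ a (h2 c hc).1
      · refine closure_span_subset ?_ hx.2
        rintro y ⟨a, c, hc, rfl⟩
        exact closure_spanR_mul C₁ a (h2 c hc).2
    have hD12 : D₁ ⊆ D₂ := by
      intro x hx
      refine ⟨?_, ?_⟩
      · refine closure_span_subset ?_ hx.1
        rintro y ⟨a, c, hc, rfl⟩
        exact closure_spanL_mul C₂ a (h1 c hc).1
      · refine closure_span_subset ?_ hx.2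
        rintro y ⟨a, c, hc, rfl⟩
        exact closure_spanR_mul C₂ a (h1 c hc).2
    exact Set.Subset.antisymm hD12 hD21
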